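/- arXiv:1912.06956 — 5 statements merged into one kernel-verified Lean document; each statement's English description precedes it below -/
import Mathlib

section
/- Let θ ∈ [0,1], α ∈ ℝ, and let (W_j)_{j∈ℤ} be a sequence with values in {−1,1} such that sup{j : W_j = 1} = sup{j : W_j = −1} = ∞. Define G_j := W_j if (α − Σ_{k<j} W_k·2^{k+θ-1} + 2^{j+θ-1}) mod 2^{j+θ+1} ∈ [0, 2^{j+θ}), and G_j := −W_j otherwise. Then there exists j₀ ∈ ℤ such that G_j = W_j for all j ≥ j₀. -/
open Real

/-- `a mod b := a - b * ⌊a / b⌋` for real numbers. -/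
noncomputable def realMod (a b : ℝ) : ℝ := a - b * ⌊a / b⌋

lemma emb (j : ℤ) : Function.Injective (fun n : ℕ => j - 1 - (n:ℤ)) := by
  intro a b h; simpa using h

lemma emb_range (j : ℤ) (x : ℤ) : (x ∈ Set.range (fun n : ℕ => j - 1 - (n:ℤ))) ↔ x < j := by
  constructor
  · rintro ⟨n, rfl⟩; simp only []; omega
  · intro h; exact ⟨(j - 1 - x).toNat, by simp only []; omega⟩

lemma hasSum_pow (θ : ℝ) (j : ℤ) :
    HasSum (fun k : ℤ => if k < j then (2:ℝ) ^ ((k:ℝ) + θ - 1) else 0)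
      ((2:ℝ) ^ ((j:ℝ) + θ - 1)) := by
  rw [← (emb j).hasSum_iff
      (by intro x hx; rw [emb_range] at hx; simp [hx]), Function.comp_def]
  have h2 : HasSum (fun n : ℕ => (2:ℝ) ^ ((j:ℝ) + θ - 2) * (2⁻¹:ℝ) ^ n)
      ((2:ℝ) ^ ((j:ℝ) + θ - 1)) := by
    have := (hasSum_geometric_of_lt_one (r := (2⁻¹:ℝ)) (by norm_num) (by norm_num)).mul_left
      ((2:ℝ) ^ ((j:ℝ) + θ - 2))
    rw [show ((2:ℝ) ^ ((j:ℝ) + θ - 1)) = 2 ^ ((j:ℝ) + θ - 2) * (1 - 2⁻¹)⁻¹ from ?_]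
    · exact this
    rw [show (j:ℝ) + θ - 1 = ((j:ℝ) + θ - 2) + 1 by ring, Real.rpow_add (by norm_num)]
    norm_num
  convert h2 using 1
  funext n
  rw [if_pos (by omega)]
  push_cast
  rw [show (j:ℝ) - 1 - (n:ℝ) + θ - 1 = ((j:ℝ) + θ - 2) + (-(n:ℝ)) by ring,
    Real.rpow_add (by norm_num), Real.rpow_neg (by norm_num), Real.rpow_natCast, inv_pow]

lemma abs_f (θ : ℝ) (W : ℤ → ℝ) (hW : ∀ j, W j = -1 ∨ W j = 1) (j : ℤ) :
    (fun k : ℤ => |if k < j then W k * (2:ℝ) ^ ((k:ℝ) + θ - 1) else 0|)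
      = fun k : ℤ => if k < j then (2:ℝ) ^ ((k:ℝ) + θ - 1) else 0 := by
  funext k
  split_ifs with h
  · rcases hW k with h1 | h1 <;> rw [h1] <;>
      simp [abs_of_nonneg (Real.rpow_pos_of_pos (show (0:ℝ) < 2 by norm_num) ((k:ℝ) + θ - 1)).le]
  · simp

lemma summable_abs_f (θ : ℝ) (W : ℤ → ℝ) (hW : ∀ j, W j = -1 ∨ W j = 1) (j : ℤ) :
    Summable (fun k : ℤ => |if k < j then W k * (2:ℝ) ^ ((k:ℝ) + θ - 1) else 0|) :=
  (abs_f θ W hW j) ▸ (hasSum_pow θ j).summable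

lemma summable_f (θ : ℝ) (W : ℤ → ℝ) (hW : ∀ j, W j = -1 ∨ W j = 1) (j : ℤ) :
    Summable (fun k : ℤ => if k < j then W k * (2:ℝ) ^ ((k:ℝ) + θ - 1) else 0) :=
  Summable.of_abs (summable_abs_f θ W hW j)

lemma abs_Sm_le (θ : ℝ) (W : ℤ → ℝ) (hW : ∀ j, W j = -1 ∨ W j = 1) (j : ℤ) :
    |∑' k : ℤ, if k < j then W k * (2:ℝ) ^ ((k:ℝ) + θ - 1) else 0| ≤ (2:ℝ) ^ ((j:ℝ) + θ - 1) := by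
  have h1 : |∑' k : ℤ, if k < j then W k * (2:ℝ) ^ ((k:ℝ) + θ - 1) else 0|
      ≤ ∑' k : ℤ, |if k < j then W k * (2:ℝ) ^ ((k:ℝ) + θ - 1) else 0| := by
    simpa [Real.norm_eq_abs] using
      norm_tsum_le_tsum_norm (f := fun k : ℤ => if k < j then W k * (2:ℝ) ^ ((k:ℝ) + θ - 1) else 0)
        (by simpa [Real.norm_eq_abs] using summable_abs_f θ W hW j)
  refine h1.trans ?_
  rw [abs_f θ W hW j, (hasSum_pow θ j).tsum_eq]

lemma Sm_succ (θ : ℝ) (W : ℤ → ℝ) (hW : ∀ j, W j = -1 ∨ W j = 1) (j : ℤ) :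
    (∑' k : ℤ, if k < j + 1 then W k * (2:ℝ) ^ ((k:ℝ) + θ - 1) else 0)
      = (∑' k : ℤ, if k < j then W k * (2:ℝ) ^ ((k:ℝ) + θ - 1) else 0)
        + W j * (2:ℝ) ^ ((j:ℝ) + θ - 1) := by
  have hfe : (fun k : ℤ => if k < j + 1 then W k * (2:ℝ) ^ ((k:ℝ) + θ - 1) else 0)
      = fun k : ℤ => (if k < j then W k * (2:ℝ) ^ ((k:ℝ) + θ - 1) else 0)
        + (if k = j then W j * (2:ℝ) ^ ((j:ℝ) + θ - 1) else 0) := by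
    funext k
    rcases lt_trichotomy k j with h | h | h
    · rw [if_pos (by omega), if_pos h, if_neg (by omega)]; ring
    · subst h; rw [if_pos (by omega), if_neg (by omega), if_pos rfl]; ring
    · rw [if_neg (by omega), if_neg (by omega), if_neg (by omega)]; ring
  rw [hfe, Summable.tsum_add (summable_f θ W hW j) (hasSum_ite_eq j _).summable,
    (hasSum_ite_eq j _).tsum_eq]

noncomputable def Yf (θ α : ℝ) (W : ℤ → ℝ) (j : ℤ) : ℝ :=
  α - (∑' k : ℤ, if k < j then W k * (2:ℝ) ^ ((k:ℝ) + θ - 1) else 0) + (2:ℝ) ^ ((j:ℝ) + θ - 1)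

lemma two_rpow_succ (x : ℝ) : (2:ℝ) ^ (x + 1) = (2:ℝ) ^ x * 2 := by
  rw [Real.rpow_add (by norm_num), Real.rpow_one]

lemma Y_rec (θ α : ℝ) (W : ℤ → ℝ) (hW : ∀ j, W j = -1 ∨ W j = 1) (j : ℤ) :
    Yf θ α W (j + 1) = Yf θ α W j + (1 - W j) * (2:ℝ) ^ ((j:ℝ) + θ - 1) := by
  unfold Yf
  rw [Sm_succ θ W hW j, show (((j+1:ℤ)):ℝ) + θ - 1 = ((j:ℝ) + θ - 1) + 1 by push_cast; ring,
    two_rpow_succ]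
  ring

lemma Y_low (θ α : ℝ) (W : ℤ → ℝ) (hW : ∀ j, W j = -1 ∨ W j = 1) (j : ℤ) :
    α ≤ Yf θ α W j := by
  have := (abs_le.mp (abs_Sm_le θ W hW j)).2
  unfold Yf; linarith

lemma Y_up (θ α : ℝ) (W : ℤ → ℝ) (hW : ∀ j, W j = -1 ∨ W j = 1) (j : ℤ) :
    Yf θ α W j ≤ α + (2:ℝ) ^ ((j:ℝ) + θ) := by
  have := (abs_le.mp (abs_Sm_le θ W hW j)).1
  have h2 : (2:ℝ) ^ ((j:ℝ) + θ) = (2:ℝ) ^ ((j:ℝ) + θ - 1) * 2 := by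
    rw [← two_rpow_succ]; ring_nf
  unfold Yf; rw [h2]; linarith

lemma Y_step (θ α : ℝ) (W : ℤ → ℝ) (hW : ∀ j, W j = -1 ∨ W j = 1) (m : ℤ) :
    Yf θ α W m ≤ Yf θ α W (m + 1) := by
  rw [Y_rec θ α W hW m]
  have hp := (Real.rpow_pos_of_pos (show (0:ℝ) < 2 by norm_num) ((m:ℝ) + θ - 1)).le
  have hw1 : W m ≤ 1 := by rcases hW m with h | h <;> rw [h] <;> norm_num
  nlinarith

lemma Y_mono (θ α : ℝ) (W : ℤ → ℝ) (hW : ∀ j, W j = -1 ∨ W j = 1) {n m : ℤ} (h : n ≤ m) :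
    Yf θ α W n ≤ Yf θ α W m :=
  Int.le_induction (motive := fun m _ => Yf θ α W n ≤ Yf θ α W m) (le_refl _)
    (fun m _ ih => ih.trans (Y_step θ α W hW m)) m h

lemma two_rpow_lt (x y : ℝ) (h : x < y) : (2:ℝ) ^ x < (2:ℝ) ^ y :=
  Real.rpow_lt_rpow_left_iff (by norm_num) |>.mpr h

theorem stmt2 (θ : ℝ) (hθ : θ ∈ Set.Icc (0:ℝ) 1) (α : ℝ) (W : ℤ → ℝ)
    (hW : ∀ j, W j = -1 ∨ W j = 1)
    (hWp : ∀ n : ℤ, ∃ j ≥ n, W j = 1) (hWm : ∀ n : ℤ, ∃ j ≥ n, W j = -1)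
    (G : ℤ → ℝ)
    (hG : ∀ j : ℤ, G j =
      if realMod (α - (∑' k : ℤ, if k < j then W k * (2:ℝ) ^ ((k:ℝ) + θ - 1) else 0)
            + (2:ℝ) ^ ((j:ℝ) + θ - 1)) ((2:ℝ) ^ ((j:ℝ) + θ + 1))
          ∈ Set.Ico (0:ℝ) ((2:ℝ) ^ ((j:ℝ) + θ))
        then W j else -W j) :
    ∃ j₀ : ℤ, ∀ j ≥ j₀, G j = W j := by
  obtain ⟨hθ0, hθ1⟩ := hθ
  have hG' : ∀ j : ℤ, G j =
      if realMod (Yf θ α W j) ((2:ℝ) ^ ((j:ℝ) + θ + 1))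
          ∈ Set.Ico (0:ℝ) ((2:ℝ) ^ ((j:ℝ) + θ)) then W j else -W j := hG
  have hpow : ∀ j : ℤ, (2:ℝ) ^ ((j:ℝ) + θ) = (1 - (-1:ℝ)) * (2:ℝ) ^ ((j:ℝ) + θ - 1) := by
    intro j
    rw [show (j:ℝ) + θ = ((j:ℝ) + θ - 1) + 1 by ring, two_rpow_succ]; ring
  -- Step 1: find a point where Yf is nonnegative
  obtain ⟨N, hN⟩ := pow_unbounded_of_one_lt (-α) (show (1:ℝ) < 2 by norm_num)
  obtain ⟨j₁, hj₁, hWj₁⟩ := hWm (N : ℤ)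
  have h2N : (2:ℝ) ^ (N : ℕ) ≤ (2:ℝ) ^ ((j₁:ℝ) + θ) := by
    rw [← Real.rpow_natCast 2 N]
    apply Real.rpow_le_rpow_of_exponent_le one_le_two
    have : (N:ℝ) ≤ (j₁:ℝ) := by exact_mod_cast hj₁
    linarith
  have ha : 0 ≤ Yf θ α W (j₁ + 1) := by
    rw [Y_rec θ α W hW j₁, hWj₁, ← hpow j₁]
    have := Y_low θ α W hW j₁
    linarith
  -- Step 2: find a point where Yf is in the good window
  obtain ⟨M, hM⟩ := pow_unbounded_of_one_lt α (show (1:ℝ) < 2 by norm_num)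
  obtain ⟨j₂, hj₂, hWj₂⟩ := hWp (max (j₁ + 1) (M : ℤ))
  have hα2 : α < (2:ℝ) ^ ((j₂:ℝ) + θ) := by
    refine hM.trans_le ?_
    rw [← Real.rpow_natCast 2 M]
    apply Real.rpow_le_rpow_of_exponent_le one_le_two
    have : (M:ℝ) ≤ (j₂:ℝ) := by exact_mod_cast (le_max_right _ _).trans hj₂
    linarith
  have hcast : ∀ j : ℤ, (((j + 1 : ℤ)):ℝ) + θ = ((j:ℝ) + θ) + 1 := by
    intro j; push_cast; ring
  have heq : Yf θ α W (j₂ + 1) = Yf θ α W j₂ := by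
    rw [Y_rec θ α W hW j₂, hWj₂]; ring
  have hbase : 0 ≤ Yf θ α W (j₂ + 1) ∧ Yf θ α W (j₂ + 1) < (2:ℝ) ^ ((((j₂ + 1 : ℤ)):ℝ) + θ) := by
    constructor
    · rw [heq]
      exact ha.trans (Y_mono θ α W hW ((le_max_left _ _).trans hj₂))
    · rw [heq, hcast j₂, two_rpow_succ]
      have := Y_up θ α W hW j₂
      linarith
  have hinv : ∀ j, j₂ + 1 ≤ j → 0 ≤ Yf θ α W j ∧ Yf θ α W j < (2:ℝ) ^ ((j:ℝ) + θ) := by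
    refine Int.le_induction hbase (fun j _ ih => ?_)
    obtain ⟨ih0, ih1⟩ := ih
    rw [Y_rec θ α W hW j, hcast j, two_rpow_succ]
    rcases hW j with h | h <;> rw [h]
    · rw [← hpow j]
      have hp := (Real.rpow_pos_of_pos (show (0:ℝ) < 2 by norm_num) ((j:ℝ) + θ)).le
      constructor <;> [positivity; linarith]
    · constructor <;> [linarith; linarith]
  refine ⟨j₂ + 1, fun j hj => ?_⟩
  obtain ⟨h0, h1⟩ := hinv j hj
  have hB : (0:ℝ) < (2:ℝ) ^ ((j:ℝ) + θ + 1) :=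
    Real.rpow_pos_of_pos (by norm_num) _
  have hlt : Yf θ α W j < (2:ℝ) ^ ((j:ℝ) + θ + 1) :=
    h1.trans (two_rpow_lt _ _ (by linarith))
  have hfloor : ⌊Yf θ α W j / (2:ℝ) ^ ((j:ℝ) + θ + 1)⌋ = 0 :=
    Int.floor_eq_zero_iff.mpr ⟨div_nonneg h0 hB.le, (div_lt_one hB).mpr hlt⟩
  have hmod : realMod (Yf θ α W j) ((2:ℝ) ^ ((j:ℝ) + θ + 1)) = Yf θ α W j := by
    rw [realMod, hfloor]; simp
  rw [hG' j, if_pos]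
  rw [hmod]
  exact Set.mem_Ico.mpr ⟨h0, h1⟩
end

section
/- Let θ ∈ [0,1], α ∈ ℝ, and let (W_j)_{j∈ℤ} be a sequence with values in {−1,1} such that sup{j : W_j = 1} = sup{j : W_j = −1} = ∞. Define G_j := W_j if (α − Σ_{k<j} W_k·2^{k+θ-1} + 2^{j+θ-1}) mod 2^{j+θ+1} ∈ [0, 2^{j+θ}), and G_j := −W_j otherwise. Then Σ_{j∈ℤ} (W_j − G_j)·2^{j+θ-1} = α. -/
open Real

lemma rm_eq {b : ℝ} (hb : 0 < b) (k : ℤ) {r : ℝ} (h0 : 0 ≤ r) (h1 : r < b) :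
    realMod (b * k + r) b = r := by
  have hb' : b ≠ 0 := ne_of_gt hb
  have h2 : ⌊(b * k + r)/b⌋ = k := by
    have : (b * k + r) / b = (k : ℝ) + r / b := by field_simp
    rw [this, Int.floor_intCast_add]
    have : ⌊r / b⌋ = 0 := by
      rw [Int.floor_eq_zero_iff]
      exact ⟨by positivity, (div_lt_one hb).2 h1⟩
    omega
  unfold realMod
  rw [h2]; ring

lemma rm_nonneg {b : ℝ} (hb : 0 < b) (a : ℝ) : 0 ≤ realMod a b := by
  have : realMod a b = b * Int.fract (a / b) := by
    unfold realMod Int.fract; field_simp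
  rw [this]
  exact mul_nonneg hb.le (Int.fract_nonneg _)

lemma rm_lt {b : ℝ} (hb : 0 < b) (a : ℝ) : realMod a b < b := by
  have : realMod a b = b * Int.fract (a / b) := by
    unfold realMod Int.fract; field_simp
  rw [this]
  nlinarith [Int.fract_lt_one (a / b)]

lemma rm_rep (a b : ℝ) : a = b * ⌊a / b⌋ + realMod a b := by unfold realMod; ring

/-- The key step lemma: pure real arithmetic. -/
lemma step_general {M u u' r G W : ℝ} (hM : 0 < M) (n : ℤ) (hu : u = M * n + r)
    (hr0 : 0 ≤ r) (hrM : r < M) (hWpm : W = -1 ∨ W = 1)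
    (husucc : u' = u + (if W = -1 then M else 0))
    (hGdef : G = if realMod u (2*M) ∈ Set.Ico (0:ℝ) M then W else -W) :
    realMod u' (2*M) = r + (if G = -1 then M else 0) := by
  have e2 := Int.emod_two_eq n
  have hn2 : (n:ℝ) = 2*((n/2 : ℤ):ℝ) + ((n%2 : ℤ):ℝ) := by
    exact_mod_cast congrArg (Int.cast : ℤ → ℝ) (Int.mul_ediv_add_emod n 2).symm
  have h2M : (0:ℝ) < 2*M := by linarith
  rcases e2 with he | he
  · -- n % 2 = 0 : realMod u (2M) = r, condition holds, G = W
    have hrm : realMod u (2*M) = r := by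
      have hrep : u = (2*M)*((n/2 : ℤ):ℝ) + r := by rw [hu, hn2, he]; push_cast; ring
      rw [hrep]; exact rm_eq h2M _ hr0 (by linarith)
    have hGW : G = W := by rw [hGdef, if_pos]; rw [hrm]; exact ⟨hr0, hrM⟩
    rcases hWpm with hw | hw
    · -- W = -1, G = -1, u' = u + M
      have hrep : u' = (2*M)*((n/2 : ℤ):ℝ) + (r + M) := by
        rw [husucc, hu, hn2, he, hw, if_pos rfl]; push_cast; ring
      rw [hrep, rm_eq h2M _ (by linarith) (by linarith), hGW, hw, if_pos rfl]; try ring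
    · -- W = 1, G = 1, u' = u
      have hrep : u' = u := by rw [husucc, hw]; norm_num
      rw [hrep, hrm, hGW, hw, if_neg (by norm_num)]; try ring
  · -- n % 2 = 1 : realMod u (2M) = M + r, condition fails, G = -W
    have hrm : realMod u (2*M) = M + r := by
      have hrep : u = (2*M)*((n/2 : ℤ):ℝ) + (M + r) := by rw [hu, hn2, he]; push_cast; ring
      rw [hrep]; exact rm_eq h2M _ (by linarith) (by linarith)
    have hGW : G = -W := by
      rw [hGdef, if_neg]; rw [hrm]; intro hmem; exact absurd hmem.2 (by linarith)
    rcases hWpm with hw | hw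
    · -- W = -1, G = 1, u' = u + M
      have hrep : u' = (2*M)*((n/2 + 1 : ℤ):ℝ) + r := by
        rw [husucc, hu, hn2, he, hw, if_pos rfl]; push_cast; ring
      rw [hrep, rm_eq h2M _ hr0 (by linarith), hGW, hw, if_neg (by norm_num)]; try ring
    · -- W = 1, G = -1, u' = u
      have hrep : u' = u := by rw [husucc, hw]; norm_num
      rw [hrep, hrm, hGW, hw, if_pos rfl]; try ring

noncomputable def mA (θ : ℝ) (j : ℤ) : ℝ := (2:ℝ) ^ ((j:ℝ) + θ)

lemma mA_pos (θ : ℝ) (j : ℤ) : 0 < mA θ j := rpow_pos_of_pos two_pos _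

lemma mA_half (θ : ℝ) (j : ℤ) : (2:ℝ) ^ ((j:ℝ) + θ - 1) = mA θ j / 2 := by
  unfold mA
  rw [show (j:ℝ) + θ - 1 = ((j:ℝ) + θ) - 1 by ring, Real.rpow_sub two_pos, Real.rpow_one]

lemma mA_double (θ : ℝ) (j : ℤ) : (2:ℝ) ^ ((j:ℝ) + θ + 1) = 2 * mA θ j := by
  unfold mA
  rw [Real.rpow_add two_pos, Real.rpow_one]; ring

lemma mA_succ (θ : ℝ) (j : ℤ) : mA θ (j + 1) = 2 * mA θ j := by
  rw [← mA_double θ j]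
  unfold mA
  congr 1
  push_cast; ring

lemma mA_mono (θ : ℝ) {i j : ℤ} (h : i ≤ j) : mA θ i ≤ mA θ j := by
  unfold mA
  apply (Real.rpow_le_rpow_left_iff one_lt_two).2
  have : (i:ℝ) ≤ (j:ℝ) := by exact_mod_cast h
  linarith

lemma mA_shift (θ : ℝ) (j : ℤ) (n : ℕ) : mA θ (j - n) = mA θ j * (1/2:ℝ)^n := by
  unfold mA
  have hexp : ((j - (n:ℤ) : ℤ):ℝ) + θ = ((j:ℝ) + θ) - (n:ℕ) := by push_cast; ring
  rw [hexp, Real.rpow_sub two_pos, Real.rpow_natCast, one_div, inv_pow, div_eq_mul_inv]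

lemma mA_ge_pow {θ : ℝ} (hθ0 : 0 ≤ θ) {t : ℕ} {j : ℤ} (h : (t:ℤ) ≤ j) :
    (2:ℝ)^t ≤ mA θ j := by
  unfold mA
  rw [← Real.rpow_natCast 2 t]
  apply (Real.rpow_le_rpow_left_iff one_lt_two).2
  have : ((t:ℕ):ℝ) ≤ (j:ℝ) := by exact_mod_cast h
  linarith

lemma geo_hasSum (θ : ℝ) (j : ℤ) :
    HasSum (fun k : ℤ => if k < j then mA θ k / 2 else 0) (mA θ j / 2) := by
  have hinj : Function.Injective (fun n : ℕ => j - 1 - (n:ℤ)) := by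
    intro a b h
    simp only at h
    omega
  have h0 : ∀ x ∉ Set.range (fun n : ℕ => j - 1 - (n:ℤ)),
      (if x < j then mA θ x / 2 else 0) = 0 := by
    intro x hx
    rw [if_neg]
    intro hxj
    exact hx ⟨(j - 1 - x).toNat, by simp only; omega⟩
  apply (Function.Injective.hasSum_iff hinj h0).1
  have hg2 : HasSum (fun n : ℕ => (mA θ j / 4) * (1/2:ℝ)^n) (mA θ j / 2) := by
    have := hasSum_geometric_two.mul_left (mA θ j / 4)
    convert this using 1
    · rfl
    ring
  convert hg2 using 1
  funext n
  simp only [Function.comp]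
  rw [if_pos (by omega : j - 1 - (n:ℤ) < j)]
  rw [show j - 1 - (n:ℤ) = (j - 1) - (n:ℤ) by ring, mA_shift θ (j-1) n]
  have : mA θ j = 2 * mA θ (j - 1) := by
    rw [← mA_succ θ (j-1)]; norm_num
  rw [this]; ring

noncomputable def SA (θ : ℝ) (W : ℤ → ℝ) (j : ℤ) : ℝ :=
  ∑' k : ℤ, if k < j then W k * (2:ℝ) ^ ((k:ℝ) + θ - 1) else 0

lemma FA_bound (θ : ℝ) {W : ℤ → ℝ} (hW : ∀ j, W j = -1 ∨ W j = 1) (j k : ℤ) :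
    ‖if k < j then W k * (2:ℝ) ^ ((k:ℝ) + θ - 1) else 0‖ ≤ (if k < j then mA θ k / 2 else 0) := by
  by_cases hk : k < j
  · rw [if_pos hk, if_pos hk, Real.norm_eq_abs, abs_mul]
    have hw : |W k| = 1 := by rcases hW k with h | h <;> simp [h]
    rw [hw, one_mul, abs_of_pos (rpow_pos_of_pos two_pos _)]
    exact le_of_eq (mA_half θ k)
  · simp [hk]

lemma FA_summable (θ : ℝ) {W : ℤ → ℝ} (hW : ∀ j, W j = -1 ∨ W j = 1) (j : ℤ) :
    Summable (fun k : ℤ => if k < j then W k * (2:ℝ) ^ ((k:ℝ) + θ - 1) else 0) :=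
  Summable.of_norm_bounded (geo_hasSum θ j).summable (FA_bound θ hW j)

lemma SA_bound (θ : ℝ) {W : ℤ → ℝ} (hW : ∀ j, W j = -1 ∨ W j = 1) (j : ℤ) :
    |SA θ W j| ≤ mA θ j / 2 := by
  have := tsum_of_norm_bounded (geo_hasSum θ j) (FA_bound θ hW j)
  simpa [SA] using this

lemma SA_succ (θ : ℝ) {W : ℤ → ℝ} (hW : ∀ j, W j = -1 ∨ W j = 1) (j : ℤ) :
    SA θ W (j+1) = SA θ W j + W j * (mA θ j / 2) := by
  have hsplit : (fun k : ℤ => if k < j + 1 then W k * (2:ℝ) ^ ((k:ℝ) + θ - 1) else 0)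
      = fun k : ℤ => (if k < j then W k * (2:ℝ) ^ ((k:ℝ) + θ - 1) else 0)
        + (if k = j then W j * (2:ℝ) ^ ((j:ℝ) + θ - 1) else 0) := by
    funext k
    by_cases h1 : k < j
    · rw [if_pos (by omega), if_pos h1, if_neg (by omega)]; ring
    · by_cases h2 : k = j
      · subst h2
        rw [if_pos (by omega), if_neg (by omega), if_pos rfl]; ring
      · rw [if_neg (by omega), if_neg h1, if_neg h2]; ring
  have h := (FA_summable θ hW j).hasSum.add
    (hasSum_ite_eq j (W j * (2:ℝ) ^ ((j:ℝ) + θ - 1)))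
  rw [← hsplit] at h
  rw [SA, h.tsum_eq, ← mA_half θ j, SA]

noncomputable def uA (θ α : ℝ) (W : ℤ → ℝ) (j : ℤ) : ℝ := α - SA θ W j + mA θ j / 2

noncomputable def rA (θ α : ℝ) (W : ℤ → ℝ) (j : ℤ) : ℝ := realMod (uA θ α W j) (mA θ j)

noncomputable def phiA (θ α : ℝ) (W : ℤ → ℝ) (j : ℤ) : ℝ := uA θ α W j - rA θ α W j

lemma uA_succ (θ α : ℝ) {W : ℤ → ℝ} (hW : ∀ j, W j = -1 ∨ W j = 1) (j : ℤ) :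
    uA θ α W (j+1) = uA θ α W j + (if W j = -1 then mA θ j else 0) := by
  unfold uA
  rw [SA_succ θ hW j, mA_succ θ j]
  rcases hW j with h | h <;> rw [h] <;> norm_num <;> ring

lemma rA_nonneg (θ α : ℝ) (W : ℤ → ℝ) (j : ℤ) : 0 ≤ rA θ α W j :=
  rm_nonneg (mA_pos θ j) _

lemma rA_lt (θ α : ℝ) (W : ℤ → ℝ) (j : ℤ) : rA θ α W j < mA θ j :=
  rm_lt (mA_pos θ j) _

lemma phiA_bound (θ α : ℝ) {W : ℤ → ℝ} (hW : ∀ j, W j = -1 ∨ W j = 1) (j : ℤ) :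
    |phiA θ α W j - α| ≤ 2 * mA θ j := by
  have h1 : phiA θ α W j - α = mA θ j / 2 - SA θ W j - rA θ α W j := by
    unfold phiA uA; ring
  have h2 := abs_le.1 (SA_bound θ hW j)
  have h3 := rA_nonneg θ α W j
  have h4 := rA_lt θ α W j
  rw [h1, abs_le]
  constructor <;> [linarith [h2.2]; linarith [h2.1]]

lemma rA_succ (θ α : ℝ) {W G : ℤ → ℝ} (hW : ∀ j, W j = -1 ∨ W j = 1)
    (hG : ∀ j : ℤ, G j =
      if realMod (α - (∑' k : ℤ, if k < j then W k * (2:ℝ) ^ ((k:ℝ) + θ - 1) else 0)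
            + (2:ℝ) ^ ((j:ℝ) + θ - 1)) ((2:ℝ) ^ ((j:ℝ) + θ + 1))
          ∈ Set.Ico (0:ℝ) ((2:ℝ) ^ ((j:ℝ) + θ))
        then W j else -W j) (j : ℤ) :
    rA θ α W (j+1) = rA θ α W j + (if G j = -1 then mA θ j else 0) := by
  have hGj : G j = if realMod (uA θ α W j) (2 * mA θ j) ∈ Set.Ico (0:ℝ) (mA θ j)
      then W j else -W j := by
    rw [hG j, mA_half θ j, mA_double θ j]
    rfl
  have h1 : rA θ α W (j+1) = realMod (uA θ α W (j+1)) (2 * mA θ j) := by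
    unfold rA; rw [mA_succ θ j]
  rw [h1]
  exact step_general (mA_pos θ j) ⌊uA θ α W j / mA θ j⌋ (rm_rep _ _)
    (rA_nonneg θ α W j) (rA_lt θ α W j) (hW j) (uA_succ θ α hW j) hGj

lemma G_pm {θ α : ℝ} {W G : ℤ → ℝ} (hW : ∀ j, W j = -1 ∨ W j = 1)
    (hG : ∀ j : ℤ, G j =
      if realMod (α - (∑' k : ℤ, if k < j then W k * (2:ℝ) ^ ((k:ℝ) + θ - 1) else 0)
            + (2:ℝ) ^ ((j:ℝ) + θ - 1)) ((2:ℝ) ^ ((j:ℝ) + θ + 1))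
          ∈ Set.Ico (0:ℝ) ((2:ℝ) ^ ((j:ℝ) + θ))
        then W j else -W j) (j : ℤ) : G j = -1 ∨ G j = 1 := by
  rw [hG j]
  split <;> rcases hW j with h | h <;> simp [h]

lemma phiA_step (θ α : ℝ) {W G : ℤ → ℝ} (hW : ∀ j, W j = -1 ∨ W j = 1)
    (hG : ∀ j : ℤ, G j =
      if realMod (α - (∑' k : ℤ, if k < j then W k * (2:ℝ) ^ ((k:ℝ) + θ - 1) else 0)
            + (2:ℝ) ^ ((j:ℝ) + θ - 1)) ((2:ℝ) ^ ((j:ℝ) + θ + 1))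
          ∈ Set.Ico (0:ℝ) ((2:ℝ) ^ ((j:ℝ) + θ))
        then W j else -W j) (j : ℤ) :
    (W j - G j) * (2:ℝ) ^ ((j:ℝ) + θ - 1) = phiA θ α W j - phiA θ α W (j+1) := by
  have hdiff : phiA θ α W j - phiA θ α W (j+1)
      = (if G j = -1 then mA θ j else 0) - (if W j = -1 then mA θ j else 0) := by
    unfold phiA
    rw [uA_succ θ α hW j, rA_succ θ α hW hG j]
    ring
  rw [mA_half θ j, hdiff]
  rcases hW j with hw | hw <;> rcases G_pm hW hG j with hg | hg <;>
    rw [hw, hg] <;> norm_num <;> ring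

lemma phiA_zero (θ α : ℝ) (W : ℤ → ℝ) {j : ℤ} (h0 : 0 ≤ uA θ α W j)
    (h1 : uA θ α W j < mA θ j) : phiA θ α W j = 0 := by
  have h : rA θ α W j = uA θ α W j := by
    have := rm_eq (mA_pos θ j) 0 h0 h1
    unfold rA
    simpa using this
  unfold phiA
  rw [h]; ring

theorem stmt4 (θ : ℝ) (hθ : θ ∈ Set.Icc (0:ℝ) 1) (α : ℝ) (W : ℤ → ℝ)
    (hW : ∀ j, W j = -1 ∨ W j = 1)
    (hWp : ∀ n : ℤ, ∃ j ≥ n, W j = 1) (hWm : ∀ n : ℤ, ∃ j ≥ n, W j = -1)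
    (G : ℤ → ℝ)
    (hG : ∀ j : ℤ, G j =
      if realMod (α - (∑' k : ℤ, if k < j then W k * (2:ℝ) ^ ((k:ℝ) + θ - 1) else 0)
            + (2:ℝ) ^ ((j:ℝ) + θ - 1)) ((2:ℝ) ^ ((j:ℝ) + θ + 1))
          ∈ Set.Ico (0:ℝ) ((2:ℝ) ^ ((j:ℝ) + θ))
        then W j else -W j) :
    ∑' j : ℤ, (W j - G j) * (2:ℝ) ^ ((j:ℝ) + θ - 1) = α := by
  obtain ⟨hθ0, -⟩ := hθ
  -- monotonicity of u
  have hu_mono : Monotone (uA θ α W) := by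
    apply monotone_int_of_le_succ
    intro j
    rw [uA_succ θ α hW j]
    have := mA_pos θ j
    split <;> linarith
  -- eventually u ≥ 0
  have hpos : ∃ j1 : ℤ, ∀ j ≥ j1, 0 ≤ uA θ α W j := by
    obtain ⟨t, ht⟩ := pow_unbounded_of_one_lt (R := ℝ) (-(uA θ α W 0)) one_lt_two
    obtain ⟨j, hj, hwj⟩ := hWm (max (t:ℤ) 0)
    refine ⟨j + 1, fun i hi => le_trans ?_ (hu_mono hi)⟩
    have h0j : (0:ℤ) ≤ j := le_trans (le_max_right _ _) hj
    have h1 : uA θ α W 0 ≤ uA θ α W j := hu_mono h0j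
    have h2 : (2:ℝ)^t ≤ mA θ j := mA_ge_pow hθ0 (le_trans (le_max_left _ _) hj)
    rw [uA_succ θ α hW j, hwj, if_pos rfl]
    linarith
  -- eventually u < m
  have hup : ∃ j2 : ℤ, ∀ j ≥ j2, uA θ α W j < mA θ j := by
    have hv : ∀ i j : ℤ, i ≤ j → uA θ α W j - mA θ j ≤ uA θ α W i - mA θ i := by
      intro i j hij
      have hA : Antitone (fun j => uA θ α W j - mA θ j) := by
        apply antitone_int_of_succ_le
        intro n
        rw [uA_succ θ α hW n, mA_succ θ n]
        have := mA_pos θ n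
        split <;> linarith
      exact hA hij
    obtain ⟨t, ht⟩ := pow_unbounded_of_one_lt (R := ℝ) (uA θ α W 0 - mA θ 0) one_lt_two
    obtain ⟨j, hj, hwj⟩ := hWp (max (t:ℤ) 0)
    refine ⟨j + 1, fun i hi => ?_⟩
    have h3 : uA θ α W i - mA θ i ≤ uA θ α W (j+1) - mA θ (j+1) := hv _ _ hi
    have h0j : (0:ℤ) ≤ j := le_trans (le_max_right _ _) hj
    have h4 : uA θ α W j - mA θ j ≤ uA θ α W 0 - mA θ 0 := hv _ _ h0j
    have h2 : (2:ℝ)^t ≤ mA θ j := mA_ge_pow hθ0 (le_trans (le_max_left _ _) hj)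
    have h5 : uA θ α W (j+1) - mA θ (j+1) = (uA θ α W j - mA θ j) - mA θ j := by
      rw [uA_succ θ α hW j, mA_succ θ j, hwj, if_neg (by norm_num)]
      ring
    linarith
  obtain ⟨j1, hj1⟩ := hpos
  obtain ⟨j2, hj2⟩ := hup
  set N : ℤ := max j1 j2 with hN
  have hphiN : ∀ j ≥ N, phiA θ α W j = 0 := by
    intro j hj
    exact phiA_zero θ α W (hj1 j (le_trans (le_max_left _ _) hj))
      (hj2 j (le_trans (le_max_right _ _) hj))
  -- the summand bound
  have hD_bound : ∀ j : ℤ, ‖(W j - G j) * (2:ℝ) ^ ((j:ℝ) + θ - 1)‖ ≤ mA θ j := by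
    intro j
    rw [Real.norm_eq_abs, mA_half θ j, abs_mul,
      abs_of_pos (by linarith [mA_pos θ j] : (0:ℝ) < mA θ j / 2)]
    have h1 : |W j - G j| ≤ 2 := by
      rcases hW j with h | h <;> rcases G_pm hW hG j with h' | h' <;> rw [h, h'] <;> norm_num
    nlinarith [mA_pos θ j]
  -- conclude via telescoping over ℕ
  apply HasSum.tsum_eq
  have hinj : Function.Injective (fun n : ℕ => N - 1 - (n:ℤ)) := by
    intro a b h
    simp only at h
    omega
  have hzero : ∀ x ∉ Set.range (fun n : ℕ => N - 1 - (n:ℤ)),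
      (W x - G x) * (2:ℝ) ^ ((x:ℝ) + θ - 1) = 0 := by
    intro x hx
    have hxN : N ≤ x := by
      by_contra hc
      push_neg at hc
      exact hx ⟨(N - 1 - x).toNat, by simp only; omega⟩
    rw [phiA_step θ α hW hG x, hphiN x hxN, hphiN (x+1) (by omega)]
    ring
  rw [← Function.Injective.hasSum_iff hinj hzero]
  have hterm : ∀ n : ℕ,
      ((fun j : ℤ => (W j - G j) * (2:ℝ) ^ ((j:ℝ) + θ - 1)) ∘ fun n : ℕ => N - 1 - (n:ℤ)) n
        = (fun i : ℕ => phiA θ α W (N - (i:ℤ))) (n+1) - (fun i : ℕ => phiA θ α W (N - (i:ℤ))) n := by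
    intro n
    simp only [Function.comp]
    rw [phiA_step θ α hW hG (N - 1 - (n:ℤ))]
    have e1 : N - 1 - (n:ℤ) + 1 = N - (n:ℤ) := by ring
    have e2 : N - ((n+1:ℕ):ℤ) = N - 1 - (n:ℤ) := by push_cast; ring
    rw [e1, e2]
  have hsummable : Summable
      ((fun j : ℤ => (W j - G j) * (2:ℝ) ^ ((j:ℝ) + θ - 1)) ∘ fun n : ℕ => N - 1 - (n:ℤ)) := by
    apply Summable.of_norm_bounded (g := fun n : ℕ => mA θ N * (1/2:ℝ)^n)
      (summable_geometric_two.mul_left _)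
    intro n
    simp only [Function.comp]
    have h1 := hD_bound (N - 1 - (n:ℤ))
    have h2 : mA θ (N-1-(n:ℤ)) = mA θ (N-1) * (1/2:ℝ)^n := by
      rw [show N - 1 - (n:ℤ) = (N-1) - (n:ℤ) by ring, mA_shift θ (N-1) n]
    have h3 : mA θ (N-1) * (1/2:ℝ)^n ≤ mA θ N * (1/2:ℝ)^n :=
      mul_le_mul_of_nonneg_right (mA_mono θ (by omega)) (by positivity)
    push_cast at h1 ⊢
    linarith
  rw [Summable.hasSum_iff_tendsto_nat hsummable]
  have hpartial : ∀ M : ℕ, (∑ i ∈ Finset.range M,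
      ((fun j : ℤ => (W j - G j) * (2:ℝ) ^ ((j:ℝ) + θ - 1)) ∘ fun n : ℕ => N - 1 - (n:ℤ)) i)
      = phiA θ α W (N - (M:ℤ)) := by
    intro M
    rw [Finset.sum_congr rfl (fun i _ => hterm i),
      Finset.sum_range_sub (fun i : ℕ => phiA θ α W (N - (i:ℤ)))]
    have : phiA θ α W (N - ((0:ℕ):ℤ)) = 0 := by
      rw [show N - ((0:ℕ):ℤ) = N by simp]
      exact hphiN N le_rfl
    rw [this]
    ring
  simp only [hpartial]
  -- Tendsto (fun M : ℕ => phiA θ α W (N - M)) atTop (𝓝 α)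
  have hb : ∀ M : ℕ, |phiA θ α W (N - (M:ℤ)) - α| ≤ (2 * mA θ N) * (1/2:ℝ)^M := by
    intro M
    calc |phiA θ α W (N - (M:ℤ)) - α| ≤ 2 * mA θ (N - (M:ℤ)) := phiA_bound θ α hW _
      _ = (2 * mA θ N) * (1/2:ℝ)^M := by rw [mA_shift θ N M]; ring
  have htend0 : Filter.Tendsto (fun M : ℕ => (2 * mA θ N) * (1/2:ℝ)^M)
      Filter.atTop (nhds 0) := by
    have := tendsto_pow_atTop_nhds_zero_of_lt_one (r := (1/2:ℝ)) (by norm_num) (by norm_num)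
    simpa using this.const_mul (2 * mA θ N)
  apply tendsto_iff_dist_tendsto_zero.2
  simp only [Real.dist_eq]
  exact squeeze_zero (fun M => abs_nonneg _) hb htend0
end

section
/- Let ψ > 0 and define F(ζ) := ∫₀¹ min{ζ⁻¹·2^{−θ}·ψ, 1} dθ for ζ > 0. Then for every ζ > ψ/2, F is differentiable at ζ with F′(ζ) = −(ζ⁻²·ψ/ln 2)·(min{ζ·ψ⁻¹, 1} − 1/2). -/
open Real

lemma rpow_exp_aux (t : ℝ) : (2:ℝ) ^ (-t) = Real.exp (Real.log 2 * (-t)) := by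
  rw [Real.rpow_def_of_pos (by norm_num)]

lemma cont_two_rpow : Continuous fun t : ℝ => (2:ℝ) ^ (-t) := by
  have : (fun t : ℝ => (2:ℝ) ^ (-t)) = fun t => Real.exp (Real.log 2 * (-t)) :=
    funext rpow_exp_aux
  rw [this]
  exact Real.continuous_exp.comp (continuous_const.mul continuous_neg)

lemma int_two_rpow (a b : ℝ) :
    ∫ θ in a..b, (2:ℝ) ^ (-θ) = ((2:ℝ)^(-a) - (2:ℝ)^(-b)) / Real.log 2 := by
  have hL : (0:ℝ) < Real.log 2 := Real.log_pos (by norm_num)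
  have key : ∀ x : ℝ, HasDerivAt (fun t => -((2:ℝ)^(-t)) / Real.log 2) ((2:ℝ)^(-x)) x := by
    intro x
    have h1 : HasDerivAt (fun t : ℝ => Real.log 2 * (-t)) (-Real.log 2) x := by
      simpa using (hasDerivAt_neg x).const_mul (Real.log 2)
    have h2 := (Real.hasDerivAt_exp (Real.log 2 * (-x))).comp x h1
    have h3 : HasDerivAt (fun t => -(Real.exp (Real.log 2 * (-t))) / Real.log 2)
        (Real.exp (Real.log 2 * (-x))) x := by
      have := (h2.neg).div_const (Real.log 2)
      refine this.congr_deriv ?_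
      field_simp
    simpa only [rpow_exp_aux] using h3
  rw [intervalIntegral.integral_eq_sub_of_hasDerivAt (fun x _ => key x)
      (cont_two_rpow.intervalIntegrable a b)]
  field_simp
  ring

lemma cont_min (ψ z : ℝ) : Continuous fun θ : ℝ => min (z⁻¹ * (2:ℝ)^(-θ) * ψ) 1 :=
  (((continuous_const.mul cont_two_rpow).mul continuous_const).min continuous_const)

lemma FB (ψ : ℝ) (hψ : 0 < ψ) (z : ℝ) (hz : ψ ≤ z) :
    (∫ θ in (0:ℝ)..1, min (z⁻¹ * (2:ℝ) ^ (-θ) * ψ) 1) = z⁻¹ * ψ / (2 * Real.log 2) := by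
  have hz0 : 0 < z := lt_of_lt_of_le hψ hz
  have hL : (0:ℝ) < Real.log 2 := Real.log_pos (by norm_num)
  have heq : Set.EqOn (fun θ => min (z⁻¹ * (2:ℝ)^(-θ) * ψ) 1)
      (fun θ => z⁻¹ * ψ * (2:ℝ)^(-θ)) (Set.uIcc (0:ℝ) 1) := by
    intro θ hθ
    rw [Set.uIcc_of_le (by norm_num)] at hθ
    have h2 : (2:ℝ)^(-θ) ≤ 1 :=
      Real.rpow_le_one_of_one_le_of_nonpos (by norm_num) (by linarith [hθ.1])
    have h2' : (0:ℝ) < (2:ℝ)^(-θ) := Real.rpow_pos_of_pos (by norm_num) _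
    have hinv : (0:ℝ) < z⁻¹ := inv_pos.2 hz0
    have hzz : z * z⁻¹ = 1 := mul_inv_cancel₀ hz0.ne'
    have ha : z⁻¹ * (2:ℝ)^(-θ) * ψ ≤ z⁻¹ * 1 * ψ :=
      mul_le_mul_of_nonneg_right (mul_le_mul_of_nonneg_left h2 hinv.le) hψ.le
    have hb : z⁻¹ * ψ ≤ z⁻¹ * z := mul_le_mul_of_nonneg_left hz hinv.le
    have hc : z⁻¹ * z = 1 := inv_mul_cancel₀ hz0.ne'
    have hle : z⁻¹ * (2:ℝ)^(-θ) * ψ ≤ 1 := by nlinarith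
    simp only [min_eq_left hle]
    ring
  rw [intervalIntegral.integral_congr heq, intervalIntegral.integral_const_mul, int_two_rpow]
  rw [neg_zero, Real.rpow_zero, Real.rpow_neg_one]
  field_simp
  ring

lemma FA (ψ : ℝ) (hψ : 0 < ψ) (z : ℝ) (h1 : ψ/2 < z) (h2 : z ≤ ψ) :
    (∫ θ in (0:ℝ)..1, min (z⁻¹ * (2:ℝ)^(-θ) * ψ) 1)
      = (Real.log ψ - Real.log z)/Real.log 2 + (1 - z⁻¹*ψ/2)/Real.log 2 := by
  have hz0 : 0 < z := lt_trans (by positivity) h1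
  have hL : (0:ℝ) < Real.log 2 := Real.log_pos (by norm_num)
  set θ₀ := (Real.log ψ - Real.log z)/Real.log 2 with hθ₀def
  have hlog : Real.log z ≤ Real.log ψ := Real.log_le_log hz0 h2
  have hθ0 : 0 ≤ θ₀ := div_nonneg (by linarith) hL.le
  have hθ1 : θ₀ ≤ 1 := by
    rw [hθ₀def, div_le_one hL]
    have : Real.log ψ < Real.log (2*z) := Real.log_lt_log hψ (by linarith)
    rw [Real.log_mul (by norm_num) hz0.ne'] at this
    linarith
  have h2rθ₀ : (2:ℝ)^(-θ₀) = z/ψ := by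
    rw [rpow_exp_aux]
    have harg : Real.log 2 * (-θ₀) = Real.log z - Real.log ψ := by
      rw [hθ₀def]; field_simp; ring
    rw [harg, Real.exp_sub, Real.exp_log hz0, Real.exp_log hψ]
  have hII : ∀ a b : ℝ, IntervalIntegrable
      (fun θ => min (z⁻¹ * (2:ℝ)^(-θ) * ψ) 1) MeasureTheory.volume a b :=
    fun a b => (cont_min ψ z).intervalIntegrable a b
  rw [← intervalIntegral.integral_add_adjacent_intervals (hII 0 θ₀) (hII θ₀ 1)]
  have hfirst : (∫ θ in (0:ℝ)..θ₀, min (z⁻¹ * (2:ℝ)^(-θ) * ψ) 1) = θ₀ := by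
    have heq : Set.EqOn (fun θ => min (z⁻¹ * (2:ℝ)^(-θ) * ψ) 1)
        (fun _ => (1:ℝ)) (Set.uIcc (0:ℝ) θ₀) := by
      intro θ hθ
      rw [Set.uIcc_of_le hθ0] at hθ
      have hge : (2:ℝ)^(-θ₀) ≤ (2:ℝ)^(-θ) :=
        Real.rpow_le_rpow_of_exponent_le (by norm_num) (by linarith [hθ.2])
      rw [h2rθ₀] at hge
      have hone : z⁻¹ * (z/ψ) * ψ = 1 := by field_simp
      have := mul_le_mul_of_nonneg_right
        (mul_le_mul_of_nonneg_left hge (inv_pos.2 hz0).le) hψ.le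
      rw [hone] at this
      simp only [min_eq_right this]
    rw [intervalIntegral.integral_congr heq]
    simp
  have hsecond : (∫ θ in θ₀..(1:ℝ), min (z⁻¹ * (2:ℝ)^(-θ) * ψ) 1)
      = (1 - z⁻¹*ψ/2)/Real.log 2 := by
    have heq : Set.EqOn (fun θ => min (z⁻¹ * (2:ℝ)^(-θ) * ψ) 1)
        (fun θ => z⁻¹ * ψ * (2:ℝ)^(-θ)) (Set.uIcc θ₀ (1:ℝ)) := by
      intro θ hθ
      rw [Set.uIcc_of_le hθ1] at hθ
      have hle2 : (2:ℝ)^(-θ) ≤ (2:ℝ)^(-θ₀) :=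
        Real.rpow_le_rpow_of_exponent_le (by norm_num) (by linarith [hθ.1])
      rw [h2rθ₀] at hle2
      have hone : z⁻¹ * (z/ψ) * ψ = 1 := by field_simp
      have := mul_le_mul_of_nonneg_right
        (mul_le_mul_of_nonneg_left hle2 (inv_pos.2 hz0).le) hψ.le
      rw [hone] at this
      simp only [min_eq_left this]
      ring
    rw [intervalIntegral.integral_congr heq, intervalIntegral.integral_const_mul,
      int_two_rpow, h2rθ₀, Real.rpow_neg_one]
    field_simp
  rw [hfirst, hsecond]

lemma derivA (ψ : ℝ) (hψ : 0 < ψ) (z : ℝ) (hz : 0 < z) :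
    HasDerivAt (fun z : ℝ => (Real.log ψ - Real.log z)/Real.log 2 + (1 - z⁻¹*ψ/2)/Real.log 2)
      (-((z ^ 2)⁻¹ * ψ / Real.log 2 * (z * ψ⁻¹ - 1/2))) z := by
  have hL : (0:ℝ) < Real.log 2 := Real.log_pos (by norm_num)
  have h1 : HasDerivAt (fun z : ℝ => (Real.log ψ - Real.log z)/Real.log 2)
      ((-z⁻¹)/Real.log 2) z :=
    ((Real.hasDerivAt_log hz.ne').const_sub (Real.log ψ)).div_const _
  have h2 : HasDerivAt (fun z : ℝ => (1 - z⁻¹*ψ/2)/Real.log 2)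
      ((-((-(z^2)⁻¹)*ψ/2))/Real.log 2) z :=
    ((((hasDerivAt_inv hz.ne').mul_const ψ).div_const 2).const_sub 1).div_const _
  have := h1.add h2
  refine this.congr_deriv ?_
  field_simp
  ring

lemma derivB (ψ : ℝ) (hψ : 0 < ψ) (z : ℝ) (hz : 0 < z) :
    HasDerivAt (fun z : ℝ => z⁻¹ * ψ / (2 * Real.log 2))
      (-((z ^ 2)⁻¹ * ψ / Real.log 2 * (1 - 1/2))) z := by
  have hL : (0:ℝ) < Real.log 2 := Real.log_pos (by norm_num)
  have := ((hasDerivAt_inv hz.ne').mul_const ψ).div_const (2 * Real.log 2)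
  refine this.congr_deriv ?_
  field_simp
  ring

theorem stmt7 (ψ : ℝ) (hψ : 0 < ψ) (ζ : ℝ) (hζ : ψ / 2 < ζ) :
    HasDerivAt (fun z : ℝ => ∫ θ in (0:ℝ)..1, min (z⁻¹ * (2:ℝ) ^ (-θ) * ψ) 1)
      (-((ζ ^ 2)⁻¹ * ψ / Real.log 2 * (min (ζ * ψ⁻¹) 1 - 1/2))) ζ := by
  have hζ0 : 0 < ζ := lt_trans (by positivity) hζ
  rcases lt_trichotomy ζ ψ with hlt | heq | hgt
  · -- ζ < ψ
    have hmin : min (ζ * ψ⁻¹) 1 = ζ * ψ⁻¹ := by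
      apply min_eq_left
      rw [mul_inv_le_iff₀ hψ]
      linarith
    rw [hmin]
    apply (derivA ψ hψ ζ hζ0).congr_of_eventuallyEq
    filter_upwards [Ioo_mem_nhds hζ hlt] with x hx
    exact FA ψ hψ x hx.1 hx.2.le
  · -- ζ = ψ
    subst heq
    have hmin : min (ζ * ζ⁻¹) 1 = 1 := by
      rw [mul_inv_cancel₀ hψ.ne', min_self]
    rw [hmin]
    have hA : HasDerivWithinAt (fun z : ℝ => ∫ θ in (0:ℝ)..1, min (z⁻¹ * (2:ℝ)^(-θ) * ζ) 1)
        (-((ζ ^ 2)⁻¹ * ζ / Real.log 2 * (1 - 1/2))) (Set.Iic ζ) ζ := by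
      have hd := (derivA ζ hψ ζ hψ).hasDerivWithinAt (s := Set.Iic ζ)
      rw [show ζ * ζ⁻¹ = 1 from mul_inv_cancel₀ hψ.ne'] at hd
      apply hd.congr_of_eventuallyEq ?_ (FA ζ hψ ζ hζ le_rfl)
      have hmem : Set.Ioi (ζ/2) ∩ Set.Iic ζ ∈ nhdsWithin ζ (Set.Iic ζ) :=
        Filter.inter_mem (mem_nhdsWithin_of_mem_nhds (Ioi_mem_nhds hζ)) self_mem_nhdsWithin
      filter_upwards [hmem] with x hx
      exact FA ζ hψ x hx.1 hx.2
    have hB : HasDerivWithinAt (fun z : ℝ => ∫ θ in (0:ℝ)..1, min (z⁻¹ * (2:ℝ)^(-θ) * ζ) 1)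
        (-((ζ ^ 2)⁻¹ * ζ / Real.log 2 * (1 - 1/2))) (Set.Ici ζ) ζ := by
      have hd := (derivB ζ hψ ζ hψ).hasDerivWithinAt (s := Set.Ici ζ)
      apply hd.congr_of_eventuallyEq ?_ (FB ζ hψ ζ le_rfl)
      filter_upwards [self_mem_nhdsWithin] with x hx
      exact FB ζ hψ x hx
    have hU := hA.union hB
    rw [Set.Iic_union_Ici] at hU
    exact hU.hasDerivAt Filter.univ_mem
  · -- ζ > ψ
    have hmin : min (ζ * ψ⁻¹) 1 = 1 := by
      apply min_eq_right
      rw [← div_eq_mul_inv, le_div_iff₀ hψ, one_mul]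
      linarith
    rw [hmin]
    apply (derivB ψ hψ ζ hζ0).congr_of_eventuallyEq
    filter_upwards [Ioi_mem_nhds hgt] with x hx
    exact FB ψ hψ x (le_of_lt hx)
end

section
/- The function γ ↦ erf(exp(γ)/√2) is concave on [0, ∞), where erf(x) := ∫_{−x}^{x} (e^{−t²}/√π) dt is the error function. -/
open Real

/-- The error function `erf x = ∫_{-x}^{x} e^{-t²}/√π dt`. -/
noncomputable def erf (x : ℝ) : ℝ := ∫ t in (-x)..x, Real.exp (-t ^ 2) / Real.sqrt π

private lemma g_cont : Continuous (fun t : ℝ => Real.exp (-t ^ 2) / Real.sqrt π) :=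
  (Real.continuous_exp.comp (by continuity)).div_const _

private lemma erf_eq (x : ℝ) :
    erf x = 2 * ∫ t in (0:ℝ)..x, Real.exp (-t ^ 2) / Real.sqrt π := by
  have h1 : IntervalIntegrable (fun t : ℝ => Real.exp (-t ^ 2) / Real.sqrt π)
      MeasureTheory.volume (-x) 0 := g_cont.intervalIntegrable _ _
  have h2 : IntervalIntegrable (fun t : ℝ => Real.exp (-t ^ 2) / Real.sqrt π)
      MeasureTheory.volume 0 x := g_cont.intervalIntegrable _ _
  have key : (∫ t in (-x)..(0:ℝ), Real.exp (-t ^ 2) / Real.sqrt π)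
      = ∫ t in (0:ℝ)..x, Real.exp (-t ^ 2) / Real.sqrt π := by
    have := intervalIntegral.integral_comp_neg (a := (0:ℝ)) (b := x)
      (fun t : ℝ => Real.exp (-t ^ 2) / Real.sqrt π)
    simp only [neg_zero] at this
    rw [← this]
    congr 1
    ext t
    ring_nf
  rw [erf, ← intervalIntegral.integral_add_adjacent_intervals h1 h2, key]
  ring

private lemma hasDerivAt_erf (x : ℝ) :
    HasDerivAt erf (2 * (Real.exp (-x ^ 2) / Real.sqrt π)) x := by
  have h : HasDerivAt (fun u : ℝ => ∫ t in (0:ℝ)..u, Real.exp (-t ^ 2) / Real.sqrt π)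
      (Real.exp (-x ^ 2) / Real.sqrt π) x :=
    intervalIntegral.integral_hasDerivAt_right (g_cont.intervalIntegrable _ _)
      (g_cont.stronglyMeasurableAtFilter _ _) g_cont.continuousAt
  have := h.const_mul 2
  refine HasDerivAt.congr_of_eventuallyEq this (Filter.Eventually.of_forall fun y => ?_)
  exact erf_eq y

theorem stmt11 :
    ConcaveOn ℝ (Set.Ici (0:ℝ)) (fun γ : ℝ => erf (Real.exp γ / Real.sqrt 2)) := by
  set F' : ℝ → ℝ := fun γ =>
    2 * (Real.exp (-(Real.exp γ / Real.sqrt 2) ^ 2) / Real.sqrt π) * (Real.exp γ / Real.sqrt 2)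
    with hF'
  set F'' : ℝ → ℝ := fun γ =>
    2 * (Real.exp (-(Real.exp γ / Real.sqrt 2) ^ 2) *
        (-(2 * (Real.exp γ / Real.sqrt 2) * (Real.exp γ / Real.sqrt 2))) / Real.sqrt π)
      * (Real.exp γ / Real.sqrt 2)
    + 2 * (Real.exp (-(Real.exp γ / Real.sqrt 2) ^ 2) / Real.sqrt π) * (Real.exp γ / Real.sqrt 2)
    with hF''
  have hu : ∀ γ : ℝ, HasDerivAt (fun γ => Real.exp γ / Real.sqrt 2)
      (Real.exp γ / Real.sqrt 2) γ := fun γ => (Real.hasDerivAt_exp γ).div_const _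
  have hd1 : ∀ γ : ℝ, HasDerivAt (fun γ : ℝ => erf (Real.exp γ / Real.sqrt 2)) (F' γ) γ := by
    intro γ
    exact (hasDerivAt_erf _).comp γ (hu γ)
  have hd2 : ∀ γ : ℝ, HasDerivAt F' (F'' γ) γ := by
    intro γ
    have hsq : HasDerivAt (fun γ : ℝ => -(Real.exp γ / Real.sqrt 2) ^ 2)
        (-(2 * (Real.exp γ / Real.sqrt 2) * (Real.exp γ / Real.sqrt 2))) γ := by
      have := ((hu γ).fun_pow 2).fun_neg
      simpa [mul_comm, mul_assoc, mul_left_comm] using this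
    have hA : HasDerivAt (fun γ : ℝ =>
        2 * (Real.exp (-(Real.exp γ / Real.sqrt 2) ^ 2) / Real.sqrt π))
        (2 * (Real.exp (-(Real.exp γ / Real.sqrt 2) ^ 2) *
          (-(2 * (Real.exp γ / Real.sqrt 2) * (Real.exp γ / Real.sqrt 2))) / Real.sqrt π)) γ :=
      ((hsq.exp).div_const _).const_mul 2
    exact hA.mul (hu γ)
  refine concaveOn_of_hasDerivWithinAt2_nonpos (f' := F') (f'' := F'') (convex_Ici 0)
    (fun γ _ => (hd1 γ).continuousAt.continuousWithinAt)
    (fun γ _ => (hd1 γ).hasDerivWithinAt)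
    (fun γ _ => (hd2 γ).hasDerivWithinAt) ?_
  intro γ hγ
  rw [interior_Ici] at hγ
  have hγ0 : (0:ℝ) < γ := hγ
  set u := Real.exp γ / Real.sqrt 2 with hudef
  have hupos : 0 < u := div_pos (Real.exp_pos γ) (Real.sqrt_pos.mpr two_pos)
  have hu2 : 1 ≤ 2 * u ^ 2 := by
    have h2 : u ^ 2 = Real.exp γ ^ 2 / 2 := by
      rw [hudef, div_pow, Real.sq_sqrt (by norm_num : (2:ℝ) ≥ 0)]
    rw [h2]
    have : 1 ≤ Real.exp γ ^ 2 := one_le_pow₀ (Real.one_le_exp hγ0.le)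
    linarith
  have hE : 0 < Real.exp (-u ^ 2) := Real.exp_pos _
  have hπ : 0 < Real.sqrt π := Real.sqrt_pos.mpr Real.pi_pos
  have : F'' γ = 2 * (Real.exp (-u ^ 2) / Real.sqrt π) * u * (1 - 2 * u ^ 2) := by
    simp only [hF'', ← hudef]
    set e := Real.exp (-u ^ 2) with he
    field_simp
    ring_nf
  rw [this]
  have h1 : 0 ≤ 2 * (Real.exp (-u ^ 2) / Real.sqrt π) * u := by positivity
  have h2 : 1 - 2 * u ^ 2 ≤ 0 := by linarith
  exact mul_nonpos_of_nonneg_of_nonpos h1 h2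
end

section
/- Let Z be a real-valued random variable with Z ≥ 1 almost surely and E[ln Z] finite. Then E[(erf(Z/√2))³] ≤ erf(exp(E[ln Z])/√2). -/
open Real MeasureTheory

namespace ErfAux

noncomputable def gfun (t : ℝ) : ℝ := Real.exp (-t ^ 2) / Real.sqrt π

lemma gfun_cont : Continuous gfun := by
  unfold gfun
  continuity

lemma gfun_nonneg (t : ℝ) : 0 ≤ gfun t :=
  div_nonneg (Real.exp_nonneg _) (Real.sqrt_nonneg _)

noncomputable def F (x : ℝ) : ℝ := ∫ t in (0:ℝ)..x, gfun t

lemma F_hasDerivAt (x : ℝ) : HasDerivAt F (gfun x) x :=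
  intervalIntegral.integral_hasDerivAt_right (gfun_cont.intervalIntegrable _ _)
    gfun_cont.aestronglyMeasurable.stronglyMeasurableAtFilter gfun_cont.continuousAt

lemma erf_eq (x : ℝ) : erf x = F x - F (-x) := by
  have h0 : erf x = ∫ t in (-x)..x, gfun t := rfl
  rw [h0, ← intervalIntegral.integral_add_adjacent_intervals
    (gfun_cont.intervalIntegrable (-x) 0) (gfun_cont.intervalIntegrable 0 x),
    intervalIntegral.integral_symm 0 (-x)]
  unfold F
  ring

lemma erf_hasDerivAt (x : ℝ) : HasDerivAt erf (2 * gfun x) x := by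
  have h : HasDerivAt (fun y => F y - F (-y)) (gfun x - gfun (-x) * (-1)) x :=
    (F_hasDerivAt x).sub ((F_hasDerivAt (-x)).comp x (hasDerivAt_neg x))
  have hg : gfun (-x) = gfun x := by unfold gfun; ring_nf
  have : HasDerivAt (fun y => F y - F (-y)) (2 * gfun x) x := by
    convert h using 1; rw [hg]; ring
  exact this.congr_of_eventuallyEq (Filter.Eventually.of_forall fun y => erf_eq y)

lemma erf_neg (x : ℝ) : erf (-x) = - erf x := by
  unfold erf
  rw [neg_neg, intervalIntegral.integral_symm]

lemma erf_nonneg {x : ℝ} (hx : 0 ≤ x) : 0 ≤ erf x := by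
  unfold erf
  apply intervalIntegral.integral_nonneg (by linarith)
  intro t _
  exact gfun_nonneg t

lemma gfun_integrable : Integrable gfun := by
  have h := (integrable_exp_neg_mul_sq (by norm_num : (0:ℝ) < 1)).div_const (Real.sqrt π)
  unfold gfun
  simpa [neg_mul, one_mul] using h

lemma integral_gfun : ∫ t, gfun t = 1 := by
  unfold gfun
  rw [integral_div]
  have h : ∫ t : ℝ, Real.exp (-t ^ 2) = Real.sqrt π := by
    have := integral_gaussian 1
    simpa using this
  rw [h, div_self]
  positivity

lemma erf_le_one (x : ℝ) : erf x ≤ 1 := by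
  rcases le_or_gt x 0 with hx | hx
  · have h1 : erf x ≤ 0 := by
      have := erf_nonneg (neg_nonneg.mpr hx)
      rw [erf_neg] at this; linarith
    linarith
  · unfold erf
    rw [intervalIntegral.integral_of_le (by linarith : -x ≤ x)]
    calc ∫ t in Set.Ioc (-x) x, gfun t ≤ ∫ t, gfun t := by
          apply setIntegral_le_integral gfun_integrable
          exact Filter.Eventually.of_forall fun t => gfun_nonneg t
      _ = 1 := integral_gfun

lemma abs_erf_le_one (x : ℝ) : |erf x| ≤ 1 := by
  rcases le_or_gt 0 x with hx | hx
  · rw [abs_of_nonneg (erf_nonneg hx)]; exact erf_le_one x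
  · have h0 : 0 ≤ erf (-x) := erf_nonneg (by linarith)
    rw [erf_neg] at h0
    rw [abs_of_nonpos (by linarith)]
    have := erf_le_one (-x)
    rw [erf_neg] at this
    linarith

/-- The concave function `γ ↦ erf (exp γ / √2)`. -/
noncomputable def f (γ : ℝ) : ℝ := erf (Real.exp γ / Real.sqrt 2)

noncomputable def f' (γ : ℝ) : ℝ :=
  Real.sqrt 2 / Real.sqrt π * Real.exp (γ - Real.exp γ ^ 2 / 2)

noncomputable def f'' (γ : ℝ) : ℝ := f' γ * (1 - Real.exp γ ^ 2)

lemma sqrt_two_sq : Real.sqrt 2 ^ 2 = 2 := Real.sq_sqrt (by norm_num)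

lemma f_hasDerivAt (γ : ℝ) : HasDerivAt f (f' γ) γ := by
  have h1 : HasDerivAt (fun γ => Real.exp γ / Real.sqrt 2) (Real.exp γ / Real.sqrt 2) γ :=
    (Real.hasDerivAt_exp γ).div_const _
  have h2 := (erf_hasDerivAt (Real.exp γ / Real.sqrt 2)).comp γ h1
  refine h2.congr_deriv ?_
  symm
  unfold gfun f'
  have hs : Real.sqrt 2 > 0 := by positivity
  have hsπ : Real.sqrt π > 0 := Real.sqrt_pos.mpr Real.pi_pos
  rw [div_pow, sqrt_two_sq]
  rw [show γ - Real.exp γ ^ 2 / 2 = γ + -(Real.exp γ ^ 2 / 2) by ring, Real.exp_add]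
  have h2 : Real.sqrt 2 * Real.sqrt 2 = 2 := Real.mul_self_sqrt (by norm_num)
  field_simp
  exact sqrt_two_sq

lemma f'_hasDerivAt (γ : ℝ) : HasDerivAt f' (f'' γ) γ := by
  have hu : HasDerivAt (fun γ => γ - Real.exp γ ^ 2 / 2)
      (1 - Real.exp γ * Real.exp γ) γ := by
    have h1 : HasDerivAt (fun γ => Real.exp γ ^ 2 / 2) (Real.exp γ * Real.exp γ) γ := by
      have := ((Real.hasDerivAt_exp γ).pow 2).div_const 2
      refine this.congr_deriv ?_
      simp
      ring
    exact (hasDerivAt_id' γ).sub h1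
  have h := ((hu.exp).const_mul (Real.sqrt 2 / Real.sqrt π))
  refine h.congr_deriv ?_
  symm
  unfold f'' f'
  have : Real.exp γ * Real.exp γ = Real.exp γ ^ 2 := by ring
  rw [this]
  ring

lemma f_concave : ConcaveOn ℝ (Set.Ici 0) f := by
  apply concaveOn_of_hasDerivWithinAt2_nonpos (convex_Ici 0)
    (fun x _ => (f_hasDerivAt x).continuousAt.continuousWithinAt)
    (fun x _ => (f_hasDerivAt x).hasDerivWithinAt)
    (fun x _ => (f'_hasDerivAt x).hasDerivWithinAt)
  intro x hx
  rw [interior_Ici] at hx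
  unfold f''
  apply mul_nonpos_of_nonneg_of_nonpos
  · unfold f'; positivity
  · have h1 : (1:ℝ) ≤ Real.exp x := Real.one_le_exp (le_of_lt hx)
    nlinarith

lemma f_nonneg (γ : ℝ) : 0 ≤ f γ := erf_nonneg (by positivity)

lemma f_le_one (γ : ℝ) : f γ ≤ 1 := erf_le_one _

lemma f_continuous : Continuous f := by
  have : Differentiable ℝ f := fun x => (f_hasDerivAt x).differentiableAt
  exact this.continuous

end ErfAux

theorem stmt12 {Ω : Type*} [MeasurableSpace Ω] (P : Measure Ω) [IsProbabilityMeasure P]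
    (Z : Ω → ℝ) (hZmeas : Measurable Z) (hZ1 : ∀ᵐ ω ∂P, 1 ≤ Z ω)
    (hZint : Integrable (fun ω => Real.log (Z ω)) P) :
    (∫ ω, (erf (Z ω / Real.sqrt 2)) ^ 3 ∂P)
      ≤ erf (Real.exp (∫ ω, Real.log (Z ω) ∂P) / Real.sqrt 2) := by
  classical
  set f := ErfAux.f
  have hfc : Continuous f := ErfAux.f_continuous
  -- integrability of f ∘ log Z
  have hmeas_flog : AEStronglyMeasurable (fun ω => f (Real.log (Z ω))) P :=
    ((hfc.measurable.comp Real.measurable_log).comp hZmeas).aestronglyMeasurable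
  have hint_flog : Integrable (fun ω => f (Real.log (Z ω))) P := by
    apply Integrable.mono' (integrable_const (1:ℝ)) hmeas_flog
    refine Filter.Eventually.of_forall fun ω => ?_
    rw [Real.norm_eq_abs, abs_of_nonneg (ErfAux.f_nonneg _)]
    exact ErfAux.f_le_one _
  -- integrability of the cube
  have hmeas_cube : AEStronglyMeasurable (fun ω => (erf (Z ω / Real.sqrt 2)) ^ 3) P := by
    have herfc : Continuous erf := by
      have : Differentiable ℝ erf := fun x => (ErfAux.erf_hasDerivAt x).differentiableAt
      exact this.continuous
    exact (((herfc.comp (continuous_id.div_const _)).pow 3).measurable.comp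
      hZmeas).aestronglyMeasurable
  have hint_cube : Integrable (fun ω => (erf (Z ω / Real.sqrt 2)) ^ 3) P := by
    apply Integrable.mono' (integrable_const (1:ℝ)) hmeas_cube
    refine Filter.Eventually.of_forall fun ω => ?_
    rw [Real.norm_eq_abs, abs_pow]
    calc |erf (Z ω / Real.sqrt 2)| ^ 3 ≤ 1 ^ 3 := by
          apply pow_le_pow_left₀ (abs_nonneg _) (ErfAux.abs_erf_le_one _)
      _ = 1 := one_pow 3
  -- Step 1: pointwise a.e., cube ≤ f (log Z)
  have hstep1 : (∫ ω, (erf (Z ω / Real.sqrt 2)) ^ 3 ∂P) ≤ ∫ ω, f (Real.log (Z ω)) ∂P := by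
    apply integral_mono_ae hint_cube hint_flog
    filter_upwards [hZ1] with ω hω
    have hz0 : (0:ℝ) < Z ω := by linarith
    have hexp : Real.exp (Real.log (Z ω)) = Z ω := Real.exp_log hz0
    show (erf (Z ω / Real.sqrt 2)) ^ 3 ≤ f (Real.log (Z ω))
    show (erf (Z ω / Real.sqrt 2)) ^ 3 ≤ erf (Real.exp (Real.log (Z ω)) / Real.sqrt 2)
    rw [hexp]
    have h0 : 0 ≤ erf (Z ω / Real.sqrt 2) := ErfAux.erf_nonneg (by positivity)
    have h1 : erf (Z ω / Real.sqrt 2) ≤ 1 := ErfAux.erf_le_one _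
    calc (erf (Z ω / Real.sqrt 2)) ^ 3 ≤ (erf (Z ω / Real.sqrt 2)) ^ 1 :=
          pow_le_pow_of_le_one h0 h1 (by norm_num)
      _ = erf (Z ω / Real.sqrt 2) := pow_one _
  -- Step 2: Jensen
  have hlog_nonneg : ∀ᵐ ω ∂P, Real.log (Z ω) ∈ Set.Ici (0:ℝ) := by
    filter_upwards [hZ1] with ω hω
    exact Real.log_nonneg hω
  have hstep2 : (∫ ω, f (Real.log (Z ω)) ∂P) ≤ f (∫ ω, Real.log (Z ω) ∂P) :=
    ErfAux.f_concave.le_map_integral hfc.continuousOn isClosed_Ici hlog_nonneg hZint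
      hint_flog
  calc (∫ ω, (erf (Z ω / Real.sqrt 2)) ^ 3 ∂P)
      ≤ ∫ ω, f (Real.log (Z ω)) ∂P := hstep1
    _ ≤ f (∫ ω, Real.log (Z ω) ∂P) := hstep2
    _ = erf (Real.exp (∫ ω, Real.log (Z ω) ∂P) / Real.sqrt 2) := rfl
end
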